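/- Let S1, W1, X1, X2, Y be finite-valued random variables on a common probability space such that (i) I(S1; Y | X1, X2, W1) = 0 (the chain S1 – X1 – Y holds given (X2, W1)), and (ii) I(X2; S1 | W1) = 0 (X2 and S1 are conditionally independent given W1). Then I(X1; Y | X2, W1) ≥ H(S1 | W1) − H(S1 | Y, W1). -/

import Mathlib

open scoped BigOperators Classical

noncomputable section

/-- Probability that the random variable `X` equals `a`, under the pmf `μ`
on the finite sample space `Ω`. -/
def prD {Ω α : Type} [Fintype Ω] (μ : Ω → ℝ) (X : Ω → α) (a : α) : ℝ :=
  ∑ ω, if X ω = a then μ ω else 0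

/-- Shannon entropy (in nats) of the random variable `X` under the pmf `μ`. -/
def ent {Ω α : Type} [Fintype Ω] [Fintype α] (μ : Ω → ℝ) (X : Ω → α) : ℝ :=
  -∑ a, prD μ X a * Real.log (prD μ X a)

/-- Conditional entropy `H(X | Y)` under the pmf `μ`. -/
def condEnt {Ω α β : Type} [Fintype Ω] [Fintype α] [Fintype β]
    (μ : Ω → ℝ) (X : Ω → α) (Y : Ω → β) : ℝ :=
  ent μ (fun ω => (X ω, Y ω)) - ent μ Y

/-- Mutual information `I(X ; Y)` under the pmf `μ`. -/
def mutInf {Ω α β : Type} [Fintype Ω] [Fintype α] [Fintype β]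
    (μ : Ω → ℝ) (X : Ω → α) (Y : Ω → β) : ℝ :=
  ent μ X + ent μ Y - ent μ (fun ω => (X ω, Y ω))

/-- Conditional mutual information `I(X ; Y | Z)` under the pmf `μ`. -/
def condMutInf {Ω α β γ : Type} [Fintype Ω] [Fintype α] [Fintype β] [Fintype γ]
    (μ : Ω → ℝ) (X : Ω → α) (Y : Ω → β) (Z : Ω → γ) : ℝ :=
  condEnt μ X Z - condEnt μ X (fun ω => (Y ω, Z ω))

/-- `p` is a probability mass function on the finite type `α`. -/
def IsPmf {α : Type} [Fintype α] (p : α → ℝ) : Prop :=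
  (∀ a, 0 ≤ p a) ∧ ∑ a, p a = 1


set_option linter.unusedSectionVars false
set_option linter.unusedVariables false
set_option maxHeartbeats 1000000

section Aux
variable {Ω α β γ δ : Type} [Fintype Ω] [Fintype α] [Fintype β] [Fintype γ] [Fintype δ]


lemma gibbs_term (p q : ℝ) (hp : 0 ≤ p) (hq : 0 ≤ q) (h : p ≠ 0 → q ≠ 0) :
    p - q ≤ p * Real.log p - p * Real.log q := by
  rcases eq_or_lt_of_le hp with h0 | h0
  · simp [← h0]; linarith
  · have hq' : 0 < q := lt_of_le_of_ne hq (Ne.symm (h h0.ne'))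
    have h1 := Real.log_le_sub_one_of_pos (show (0:ℝ) < q / p from div_pos hq' h0)
    rw [Real.log_div hq'.ne' h0.ne'] at h1
    have h2 := mul_le_mul_of_nonneg_left h1 hp
    have h3 : p * (q / p) = q := by field_simp
    rw [mul_sub, mul_sub, h3, mul_one] at h2
    linarith

lemma gibbs_sum {α β : Type} [Fintype α] [Fintype β] (p : α → β → ℝ)
    (hp : ∀ x y, 0 ≤ p x y) :
    (∑ x, (∑ y, p x y) * Real.log (∑ y, p x y))
      + ∑ y, (∑ x, p x y) * Real.log (∑ x, p x y)
    ≤ (∑ x, ∑ y, p x y) * Real.log (∑ x, ∑ y, p x y)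
      + ∑ x, ∑ y, p x y * Real.log (p x y) := by
  classical
  set a : α → ℝ := fun x => ∑ y, p x y with ha
  set b : β → ℝ := fun y => ∑ x, p x y with hb
  set s : ℝ := ∑ x, ∑ y, p x y with hs
  have hann : ∀ x, 0 ≤ a x := fun x => Finset.sum_nonneg fun y _ => hp x y
  have hbnn : ∀ y, 0 ≤ b y := fun y => Finset.sum_nonneg fun x _ => hp x y
  have hsnn : 0 ≤ s := Finset.sum_nonneg fun x _ => hann x
  have hpa : ∀ x y, p x y ≤ a x := fun x y =>
    Finset.single_le_sum (fun y _ => hp x y) (Finset.mem_univ y)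
  have hpb : ∀ x y, p x y ≤ b y := fun x y =>
    Finset.single_le_sum (fun x _ => hp x y) (Finset.mem_univ x)
  rcases eq_or_lt_of_le hsnn with h0 | h0
  · -- s = 0, so all p = 0
    have hall : ∀ x y, p x y = 0 := by
      intro x y
      have h1 : ∑ x, a x = 0 := h0.symm
      have h2 : a x = 0 :=
        (Finset.sum_eq_zero_iff_of_nonneg (fun x _ => hann x)).mp h1 x (Finset.mem_univ x)
      have := (Finset.sum_eq_zero_iff_of_nonneg (fun y _ => hp x y)).mp h2 y (Finset.mem_univ y)
      exact this
    simp only [ha, hb, hs]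
    simp [hall]
  · -- s > 0
    set q : α → β → ℝ := fun x y => a x * b y / s with hq
    have hqnn : ∀ x y, 0 ≤ q x y := fun x y =>
      div_nonneg (mul_nonneg (hann x) (hbnn y)) hsnn
    have key : ∀ x y, p x y - q x y ≤ p x y * Real.log (p x y) - p x y * Real.log (q x y) := by
      intro x y
      refine gibbs_term _ _ (hp x y) (hqnn x y) ?_
      intro hne hq0
      have ha0 : a x ≠ 0 := fun h => hne (le_antisymm (h ▸ hpa x y) (hp x y))
      have hb0 : b y ≠ 0 := fun h => hne (le_antisymm (h ▸ hpb x y) (hp x y))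
      exact (div_ne_zero (mul_ne_zero ha0 hb0) h0.ne') hq0
    -- rewrite p * log q
    have hlq : ∀ x y, p x y * Real.log (q x y)
        = p x y * Real.log (a x) + p x y * Real.log (b y) - p x y * Real.log s := by
      intro x y
      rcases eq_or_ne (p x y) 0 with h | h
      · simp [h]
      · have ha0 : a x ≠ 0 := fun hh => h (le_antisymm (hh ▸ hpa x y) (hp x y))
        have hb0 : b y ≠ 0 := fun hh => h (le_antisymm (hh ▸ hpb x y) (hp x y))
        rw [hq]
        rw [Real.log_div (mul_ne_zero ha0 hb0) h0.ne', Real.log_mul ha0 hb0]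
        ring
    have hbs : ∑ y, b y = s := by rw [hs]; exact Finset.sum_comm
    -- sum of q
    have hsq : ∑ x, ∑ y, q x y = s := by
      have h1 : ∀ x, ∑ y, q x y = a x * s / s := by
        intro x
        rw [hq]
        simp only
        rw [← Finset.sum_div, ← Finset.mul_sum, hbs]
      rw [Finset.sum_congr rfl fun x _ => h1 x]
      rw [← Finset.sum_div, ← Finset.sum_mul]
      field_simp
      rfl
    have hsum := Finset.sum_le_sum (fun x (_ : x ∈ Finset.univ) =>
      Finset.sum_le_sum (fun y (_ : y ∈ Finset.univ) => key x y))
    rw [Finset.sum_congr rfl (fun x _ => Finset.sum_sub_distrib _ _),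
        Finset.sum_sub_distrib, hsq] at hsum
    have hA : ∑ x, ∑ y, p x y * Real.log (a x) = ∑ x, a x * Real.log (a x) :=
      Finset.sum_congr rfl fun x _ => (Finset.sum_mul _ _ _).symm
    have hB : ∑ x, ∑ y, p x y * Real.log (b y) = ∑ y, b y * Real.log (b y) := by
      rw [Finset.sum_comm]
      exact Finset.sum_congr rfl fun y _ => (Finset.sum_mul _ _ _).symm
    have hS : ∑ x, ∑ y, p x y * Real.log s = s * Real.log s := by
      simp only [← Finset.sum_mul]
      rfl
    have hQ : ∑ x, ∑ y, p x y * Real.log (q x y)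
        = (∑ x, a x * Real.log (a x)) + (∑ y, b y * Real.log (b y)) - s * Real.log s := by
      simp only [hlq, Finset.sum_sub_distrib, Finset.sum_add_distrib]
      rw [hA, hB, hS]
    rw [Finset.sum_congr rfl (fun x (_ : x ∈ Finset.univ) => Finset.sum_sub_distrib _ _),
        Finset.sum_sub_distrib, hQ] at hsum
    linarith


lemma prD_nonneg {μ : Ω → ℝ} (hμ : ∀ ω, 0 ≤ μ ω) (X : Ω → α) (a : α) : 0 ≤ prD μ X a :=
  Finset.sum_nonneg fun ω _ => by split <;> [exact hμ ω; exact le_rfl]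

lemma ent_comp_equiv (μ : Ω → ℝ) (e : α ≃ β) (X : Ω → α) :
    ent μ (fun ω => e (X ω)) = ent μ X := by
  have h : ∀ b, prD μ (fun ω => e (X ω)) b = prD μ X (e.symm b) := by
    intro b
    unfold prD
    refine Finset.sum_congr rfl fun ω _ => ?_
    congr 1
    simp [Equiv.eq_symm_apply, eq_comm]
  unfold ent
  rw [Finset.sum_congr rfl fun b _ => by rw [h b]]
  congr 1
  exact Equiv.sum_comp e.symm (fun a => prD μ X a * Real.log (prD μ X a))

lemma prD_margY (μ : Ω → ℝ) (X : Ω → α) (Y : Ω → β) (Z : Ω → γ) (x : α) (z : γ) :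
    prD μ (fun ω => (X ω, Z ω)) (x, z)
      = ∑ y, prD μ (fun ω => (X ω, Y ω, Z ω)) (x, y, z) := by
  unfold prD
  rw [Finset.sum_comm]
  refine Finset.sum_congr rfl fun ω _ => ?_
  by_cases hx : X ω = x <;> by_cases hz : Z ω = z <;>
    simp [hx, hz, Prod.ext_iff, Finset.sum_ite_eq]

lemma prD_margX (μ : Ω → ℝ) (X : Ω → α) (Y : Ω → β) (Z : Ω → γ) (y : β) (z : γ) :
    prD μ (fun ω => (Y ω, Z ω)) (y, z)
      = ∑ x, prD μ (fun ω => (X ω, Y ω, Z ω)) (x, y, z) := by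
  unfold prD
  rw [Finset.sum_comm]
  refine Finset.sum_congr rfl fun ω _ => ?_
  by_cases hy : Y ω = y <;> by_cases hz : Z ω = z <;>
    simp [hy, hz, Prod.ext_iff, Finset.sum_ite_eq]

lemma prD_margXY (μ : Ω → ℝ) (X : Ω → α) (Y : Ω → β) (Z : Ω → γ) (z : γ) :
    prD μ Z z = ∑ x, ∑ y, prD μ (fun ω => (X ω, Y ω, Z ω)) (x, y, z) := by
  unfold prD
  rw [Finset.sum_comm]
  rw [Finset.sum_congr rfl fun ω (_ : ω ∈ Finset.univ) => Finset.sum_comm]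
  rw [Finset.sum_comm]
  refine Finset.sum_congr rfl fun ω _ => ?_
  by_cases hz : Z ω = z <;>
    simp [hz, Prod.ext_iff, ite_and, Finset.sum_ite_eq]


lemma ent_of_equiv (μ : Ω → ℝ) (e : α ≃ β) (X : Ω → α) (Y : Ω → β)
    (h : ∀ ω, e (X ω) = Y ω) : ent μ X = ent μ Y := by
  rw [← ent_comp_equiv μ e X]
  congr 1
  funext ω
  exact h ω

/-- swap the first two components of a triple -/
def swap12 (α β γ : Type) : α × β × γ ≃ β × α × γ where
  toFun p := (p.2.1, (p.1, p.2.2))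
  invFun p := (p.2.1, (p.1, p.2.2))
  left_inv := fun ⟨a, b, c⟩ => rfl
  right_inv := fun ⟨a, b, c⟩ => rfl

lemma condMutInf_comm (μ : Ω → ℝ) (X : Ω → α) (Y : Ω → β) (Z : Ω → γ) :
    condMutInf μ X Y Z = condMutInf μ Y X Z := by
  unfold condMutInf condEnt
  have E : ent μ (fun ω => (X ω, Y ω, Z ω)) = ent μ (fun ω => (Y ω, X ω, Z ω)) :=
    ent_of_equiv μ (swap12 α β γ) _ _ (fun ω => rfl)
  rw [E]; ring

lemma condMutInf_chain (μ : Ω → ℝ) (X : Ω → α) (Y : Ω → β) (Z : Ω → γ) (W : Ω → δ) :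
    condMutInf μ X (fun ω => (Y ω, Z ω)) W
      = condMutInf μ X Z W + condMutInf μ X Y (fun ω => (Z ω, W ω)) := by
  unfold condMutInf condEnt
  have E1 : ent μ (fun ω => (X ω, (Y ω, Z ω), W ω))
      = ent μ (fun ω => (X ω, Y ω, Z ω, W ω)) :=
    ent_of_equiv μ ((Equiv.refl α).prodCongr (Equiv.prodAssoc β γ δ)) _ _ (fun ω => rfl)
  have E2 : ent μ (fun ω => ((Y ω, Z ω), W ω)) = ent μ (fun ω => (Y ω, Z ω, W ω)) :=
    ent_of_equiv μ (Equiv.prodAssoc β γ δ) _ _ (fun ω => rfl)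
  rw [E1, E2]; ring

lemma condMutInf_swap_mid (μ : Ω → ℝ) (X : Ω → α) (Y : Ω → β) (Z : Ω → γ) (W : Ω → δ) :
    condMutInf μ X (fun ω => (Y ω, Z ω)) W = condMutInf μ X (fun ω => (Z ω, Y ω)) W := by
  unfold condMutInf condEnt
  have E1 : ent μ (fun ω => (X ω, (Y ω, Z ω), W ω))
      = ent μ (fun ω => (X ω, (Z ω, Y ω), W ω)) :=
    ent_of_equiv μ ((Equiv.refl α).prodCongr ((Equiv.prodComm β γ).prodCongr (Equiv.refl δ)))
      _ _ (fun ω => rfl)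
  have E2 : ent μ (fun ω => ((Y ω, Z ω), W ω)) = ent μ (fun ω => ((Z ω, Y ω), W ω)) :=
    ent_of_equiv μ ((Equiv.prodComm β γ).prodCongr (Equiv.refl δ)) _ _ (fun ω => rfl)
  rw [E1, E2]

lemma condMutInf_nonneg (μ : Ω → ℝ) (hμ : ∀ ω, 0 ≤ μ ω)
    (X : Ω → α) (Y : Ω → β) (Z : Ω → γ) : 0 ≤ condMutInf μ X Y Z := by
  classical
  set P : α → β → γ → ℝ := fun x y z => prD μ (fun ω => (X ω, Y ω, Z ω)) (x, y, z) with hP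
  have hPnn : ∀ x y z, 0 ≤ P x y z := fun x y z => prD_nonneg hμ _ _
  have e1 : ent μ (fun ω => (X ω, Z ω))
      = -∑ z, ∑ x, (∑ y, P x y z) * Real.log (∑ y, P x y z) := by
    unfold ent
    congr 1
    rw [Fintype.sum_prod_type, Finset.sum_comm]
    exact Finset.sum_congr rfl fun z _ => Finset.sum_congr rfl fun x _ => by
      rw [prD_margY μ X Y Z x z]
  have e2 : ent μ (fun ω => (Y ω, Z ω))
      = -∑ z, ∑ y, (∑ x, P x y z) * Real.log (∑ x, P x y z) := by
    unfold ent
    congr 1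
    rw [Fintype.sum_prod_type, Finset.sum_comm]
    exact Finset.sum_congr rfl fun z _ => Finset.sum_congr rfl fun y _ => by
      rw [prD_margX μ X Y Z y z]
  have e3 : ent μ Z
      = -∑ z, (∑ x, ∑ y, P x y z) * Real.log (∑ x, ∑ y, P x y z) := by
    unfold ent
    congr 1
    exact Finset.sum_congr rfl fun z _ => by rw [prD_margXY μ X Y Z z]
  have e4 : ent μ (fun ω => (X ω, Y ω, Z ω))
      = -∑ z, ∑ x, ∑ y, P x y z * Real.log (P x y z) := by
    unfold ent
    congr 1
    simp only [Fintype.sum_prod_type]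
    rw [Finset.sum_congr rfl fun x (_ : x ∈ Finset.univ) => Finset.sum_comm,
        Finset.sum_comm]
  have key := Finset.sum_le_sum fun z (_ : z ∈ Finset.univ) =>
    gibbs_sum (fun x y => P x y z) (fun x y => hPnn x y z)
  rw [Finset.sum_add_distrib, Finset.sum_add_distrib] at key
  unfold condMutInf condEnt
  rw [e1, e2, e3, e4]
  linarith

end Aux

/-- If `I(S1; Y | X1, X2, W1) = 0` (the chain `S1 – X1 – Y` holds given
`(X2, W1)`) and `I(X2; S1 | W1) = 0` (`X2` and `S1` are conditionally independent
given `W1`), then `I(X1; Y | X2, W1) ≥ H(S1|W1) − H(S1|Y, W1)`. -/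
theorem mac_side_info_converse_single_user
    {Ω S1t W1t X1t X2t Yt : Type}
    [Fintype Ω] [Fintype S1t] [Fintype W1t] [Fintype X1t] [Fintype X2t] [Fintype Yt]
    (μ : Ω → ℝ) (hμ : IsPmf μ)
    (S1 : Ω → S1t) (W1 : Ω → W1t) (X1 : Ω → X1t) (X2 : Ω → X2t) (Y : Ω → Yt)
    (h1 : condMutInf μ S1 Y (fun ω => (X1 ω, X2 ω, W1 ω)) = 0)
    (h2 : condMutInf μ X2 S1 W1 = 0) :
    condEnt μ S1 W1 - condEnt μ S1 (fun ω => (Y ω, W1 ω)) ≤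
      condMutInf μ X1 Y (fun ω => (X2 ω, W1 ω)) := by
  obtain ⟨hμ0, _⟩ := hμ
  have step0 : condEnt μ S1 W1 - condEnt μ S1 (fun ω => (Y ω, W1 ω))
      = condMutInf μ S1 Y W1 := rfl
  have c1 : condMutInf μ S1 (fun ω => (Y ω, X2 ω)) W1
      = condMutInf μ S1 X2 W1 + condMutInf μ S1 Y (fun ω => (X2 ω, W1 ω)) :=
    condMutInf_chain μ S1 Y X2 W1
  have c2 : condMutInf μ S1 (fun ω => (X2 ω, Y ω)) W1
      = condMutInf μ S1 Y W1 + condMutInf μ S1 X2 (fun ω => (Y ω, W1 ω)) :=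
    condMutInf_chain μ S1 X2 Y W1
  have cswap : condMutInf μ S1 (fun ω => (Y ω, X2 ω)) W1
      = condMutInf μ S1 (fun ω => (X2 ω, Y ω)) W1 :=
    condMutInf_swap_mid μ S1 Y X2 W1
  have hsym2 : condMutInf μ S1 X2 W1 = condMutInf μ X2 S1 W1 := condMutInf_comm μ S1 X2 W1
  have n1 : 0 ≤ condMutInf μ S1 X2 (fun ω => (Y ω, W1 ω)) :=
    condMutInf_nonneg μ hμ0 S1 X2 _
  have c3 : condMutInf μ Y (fun ω => (S1 ω, X1 ω)) (fun ω => (X2 ω, W1 ω))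
      = condMutInf μ Y X1 (fun ω => (X2 ω, W1 ω))
        + condMutInf μ Y S1 (fun ω => (X1 ω, X2 ω, W1 ω)) :=
    condMutInf_chain μ Y S1 X1 (fun ω => (X2 ω, W1 ω))
  have c4 : condMutInf μ Y (fun ω => (X1 ω, S1 ω)) (fun ω => (X2 ω, W1 ω))
      = condMutInf μ Y S1 (fun ω => (X2 ω, W1 ω))
        + condMutInf μ Y X1 (fun ω => (S1 ω, X2 ω, W1 ω)) :=
    condMutInf_chain μ Y X1 S1 (fun ω => (X2 ω, W1 ω))
  have cswap2 : condMutInf μ Y (fun ω => (S1 ω, X1 ω)) (fun ω => (X2 ω, W1 ω))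
      = condMutInf μ Y (fun ω => (X1 ω, S1 ω)) (fun ω => (X2 ω, W1 ω)) :=
    condMutInf_swap_mid μ Y S1 X1 (fun ω => (X2 ω, W1 ω))
  have hsymA : condMutInf μ Y S1 (fun ω => (X1 ω, X2 ω, W1 ω))
      = condMutInf μ S1 Y (fun ω => (X1 ω, X2 ω, W1 ω)) := condMutInf_comm μ Y S1 _
  have hsymB : condMutInf μ Y X1 (fun ω => (X2 ω, W1 ω))
      = condMutInf μ X1 Y (fun ω => (X2 ω, W1 ω)) := condMutInf_comm μ Y X1 _
  have hsymC : condMutInf μ Y S1 (fun ω => (X2 ω, W1 ω))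
      = condMutInf μ S1 Y (fun ω => (X2 ω, W1 ω)) := condMutInf_comm μ Y S1 _
  have n2 : 0 ≤ condMutInf μ Y X1 (fun ω => (S1 ω, X2 ω, W1 ω)) :=
    condMutInf_nonneg μ hμ0 Y X1 _
  rw [step0]
  linarith
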